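/- Fix j ∈ {1,2}, ρ ≥ 1, μ ∈ (0,1] and an integer N ≥ 1. Then for all s > 0 and all ω > 0, |φ_N^{(j)}(s,ω,ρ,μ)| ≤ (1/((N−1)! ρ)) Γ(N/ρ) s^{μ−1} ω^{−N/ρ}. -/

import Mathlib

/-!
STATEMENT 1: For j ∈ {1,2}, ρ ≥ 1, μ ∈ (0,1] and an integer N ≥ 1, for all s > 0 and ω > 0,
|φ_N^{(j)}(s,ω,ρ,μ)| ≤ (1/((N−1)! ρ)) Γ(N/ρ) s^{μ−1} ω^{−N/ρ}.
-/

open MeasureTheory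

/-- The sign (−1)^{j+1}: +1 for j = 1, −1 for j = 2. -/
noncomputable def esgn (j : ℕ) : ℝ := if j = 1 then 1 else -1

/-- The unit direction e^{(−1)^{j+1} iπ/(2ρ)} of the half-line Λ^{(j)}. -/
noncomputable def edir (j : ℕ) (ρ : ℝ) : ℂ :=
  Complex.exp ((esgn j * (Real.pi / (2 * ρ)) : ℝ) * Complex.I)

/-- The integrand of φ_{n+1}^{(j)}(s,ω,ρ,μ), parametrizing Λ^{(j)}(s) by z = s + t·e^{(−1)^{j+1}iπ/(2ρ)},
    t ≥ 0 (principal-branch complex powers). -/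
noncomputable def phiInt (j n : ℕ) (s ω ρ μ : ℝ) (t : ℝ) : ℂ :=
  (((s : ℂ) + (t : ℂ) * edir j ρ) - (s : ℂ)) ^ n *
    ((s : ℂ) + (t : ℂ) * edir j ρ) ^ ((μ : ℂ) - 1) *
    Complex.exp ((esgn j : ℂ) * Complex.I * (ω : ℂ) *
      ((s : ℂ) + (t : ℂ) * edir j ρ) ^ (ρ : ℂ)) *
    edir j ρ

/-- φ_{n+1}^{(j)}(s,ω,ρ,μ) := ((−1)^{n+1}/n!) ∫_{Λ^{(j)}(s)} (z−s)^n z^{μ−1} e^{(−1)^{j+1}iωz^ρ} dz. -/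
noncomputable def phiE (j n : ℕ) (s ω ρ μ : ℝ) : ℂ :=
  ((-1 : ℂ) ^ (n + 1) / (n.factorial : ℂ)) * ∫ t in Set.Ioi (0 : ℝ), phiInt j n s ω ρ μ t


section auxlemmas
open Complex Real Set


lemma im_cpow_real {z : ℂ} (hz : z ≠ 0) (c : ℝ) :
    (z ^ (c : ℂ)).im = ‖z‖ ^ c * Real.sin (c * arg z) := by
  rw [cpow_def_of_ne_zero hz, exp_im]
  have h1 : (Complex.log z * (c:ℂ)).re = c * Real.log (‖z‖) := by
    simp [Complex.mul_re, Complex.log_re, mul_comm]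
  have h2 : (Complex.log z * (c:ℂ)).im = c * arg z := by
    simp [Complex.mul_im, Complex.log_im, mul_comm]
  rw [h1, h2, Real.rpow_def_of_pos (norm_pos_iff.mpr hz), mul_comm (Real.log _)]

-- geometric facts about z = s + t e^{iθ}
section geom

variable {θ s t : ℝ}

lemma zre (hθ : 0 < θ) (hθ' : θ ≤ π / 2) :
    ((s : ℂ) + (t : ℂ) * Complex.exp ((θ : ℂ) * Complex.I)).re = s + t * Real.cos θ := by
  simp [Complex.add_re, Complex.mul_re, Complex.exp_ofReal_mul_I_re, Complex.exp_ofReal_mul_I_im]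

lemma zim :
    ((s : ℂ) + (t : ℂ) * Complex.exp ((θ : ℂ) * Complex.I)).im = t * Real.sin θ := by
  simp [Complex.add_im, Complex.mul_im, Complex.exp_ofReal_mul_I_re, Complex.exp_ofReal_mul_I_im]

lemma zim_pos (hθ : 0 < θ) (hθ' : θ ≤ π / 2) (ht : 0 < t) :
    0 < ((s : ℂ) + (t : ℂ) * Complex.exp ((θ : ℂ) * Complex.I)).im := by
  rw [zim]
  exact mul_pos ht (Real.sin_pos_of_pos_of_lt_pi hθ (lt_of_le_of_lt hθ' (by linarith [Real.pi_pos])))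

lemma zne (hθ : 0 < θ) (hθ' : θ ≤ π / 2) (ht : 0 < t) :
    ((s : ℂ) + (t : ℂ) * Complex.exp ((θ : ℂ) * Complex.I)) ≠ 0 := by
  intro h
  have := zim_pos (s := s) (t := t) hθ hθ' ht
  rw [h] at this; simp at this

lemma zarg_nonneg (hθ : 0 < θ) (hθ' : θ ≤ π / 2) (ht : 0 < t) :
    0 ≤ arg ((s : ℂ) + (t : ℂ) * Complex.exp ((θ : ℂ) * Complex.I)) :=
  arg_nonneg_iff.2 (zim_pos hθ hθ' ht).le

lemma zabs_ge (hθ : 0 < θ) (hθ' : θ ≤ π / 2) (hs : 0 ≤ s) (ht : 0 ≤ t) :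
    s ≤ ‖(s : ℂ) + (t : ℂ) * Complex.exp ((θ : ℂ) * Complex.I)‖ := by
  have h1 : s ≤ ((s : ℂ) + (t : ℂ) * Complex.exp ((θ : ℂ) * Complex.I)).re := by
    rw [zre hθ hθ']
    have : 0 ≤ Real.cos θ := Real.cos_nonneg_of_mem_Icc ⟨by linarith, hθ'⟩
    nlinarith
  exact h1.trans (Complex.re_le_norm _)

lemma zabs_le (ht : 0 ≤ t) :
    ‖(s : ℂ) + (t : ℂ) * Complex.exp ((θ : ℂ) * Complex.I)‖ ≤ |s| + t := by
  refine (norm_add_le _ _).trans ?_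
  simp [Complex.norm_exp_ofReal_mul_I, _root_.abs_of_nonneg ht]

lemma zarg_le (hθ : 0 < θ) (hθ' : θ ≤ π / 2) (hs : 0 ≤ s) (ht : 0 < t) :
    arg ((s : ℂ) + (t : ℂ) * Complex.exp ((θ : ℂ) * Complex.I)) ≤ θ := by
  set z := (s : ℂ) + (t : ℂ) * Complex.exp ((θ : ℂ) * Complex.I) with hzdef
  have hz : z ≠ 0 := zne hθ hθ' ht
  have habs : 0 < ‖z‖ := norm_pos_iff.mpr hz
  have hcos : Real.cos θ ≤ Real.cos (arg z) := by
    rw [Complex.cos_arg hz, le_div_iff₀ habs]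
    have h1 : ‖z‖ ≤ s + t := by
      simpa [_root_.abs_of_nonneg hs] using zabs_le (θ := θ) (s := s) (t := t) ht.le
    have h2 : z.re = s + t * Real.cos θ := zre hθ hθ'
    have hc1 : Real.cos θ ≤ 1 := Real.cos_le_one θ
    have hc0 : 0 ≤ Real.cos θ := Real.cos_nonneg_of_mem_Icc ⟨by linarith, hθ'⟩
    nlinarith
  by_contra hlt
  push_neg at hlt
  have harg2 : arg z ≤ π := Complex.arg_le_pi z
  have := Real.strictAntiOn_cos ⟨by linarith, by linarith [Real.pi_pos]⟩
    ⟨zarg_nonneg hθ hθ' ht, harg2⟩ hlt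
  linarith

end geom

lemma key_im {ρ : ℝ} (hρ : 1 ≤ ρ) {s t : ℝ} (hs : 0 ≤ s) (ht : 0 < t) :
    t ^ ρ ≤ (((s:ℂ) + (t:ℂ) * Complex.exp ((↑(π / (2*ρ)) : ℂ) * Complex.I)) ^ (ρ:ℂ)).im := by
  have hρ0 : 0 < ρ := by linarith
  set θ : ℝ := π / (2*ρ) with hθdef
  have hθpos : 0 < θ := div_pos Real.pi_pos (by linarith)
  have hθle : θ ≤ π / 2 := by
    rw [hθdef, div_le_div_iff₀ (by linarith) (by norm_num)]
    nlinarith [Real.pi_pos]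
  set w : ℂ := (t:ℂ) * Complex.exp ((θ:ℂ) * Complex.I) with hwdef
  have hder : ∀ x : ℝ, HasDerivAt (fun x : ℝ => (((x:ℂ) + w) ^ (ρ:ℂ)).im)
      (((ρ:ℂ) * ((x:ℂ) + w) ^ ((ρ:ℂ) - 1) * 1).im) x := by
    intro x
    have h1 : HasDerivAt (fun x : ℝ => (x:ℂ) + w) 1 x := by
      simpa using (Complex.ofRealCLM.hasDerivAt (x := x)).add_const w
    have him : ((x:ℂ) + w).im ≠ 0 := by
      rw [hwdef]
      exact (zim_pos hθpos hθle ht).ne'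
    have hc : HasDerivAt (fun z : ℂ => z ^ (ρ:ℂ)) ((ρ:ℂ) * ((x:ℂ) + w) ^ ((ρ:ℂ) - 1)) ((x:ℂ) + w) :=
      (Complex.hasStrictDerivAt_cpow_const (Complex.mem_slitPlane_iff.2 (Or.inr him))).hasDerivAt
    have h2 := hc.comp x h1
    exact (Complex.imCLM.hasFDerivAt.comp_hasDerivAt x h2)
  have hmono : MonotoneOn (fun x : ℝ => (((x:ℂ) + w) ^ (ρ:ℂ)).im) (Set.Ici 0) := by
    apply monotoneOn_of_deriv_nonneg (convex_Ici 0)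
    · exact fun x _ => ((hder x).continuousAt).continuousWithinAt
    · exact fun x _ => ((hder x).differentiableAt).differentiableWithinAt
    · intro x hx
      rw [interior_Ici] at hx
      rw [(hder x).deriv, mul_one]
      have hzne : ((x:ℂ) + w) ≠ 0 := by rw [hwdef]; exact zne hθpos hθle ht
      have e1 : ((ρ:ℂ) * ((x:ℂ) + w) ^ ((ρ:ℂ) - 1)).im = ρ * (((x:ℂ) + w) ^ ((ρ:ℂ) - 1)).im := by
        simp [Complex.mul_im]
      have e2 : ((ρ:ℂ) - 1) = ((ρ - 1 : ℝ) : ℂ) := by push_cast; ring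
      rw [e1, e2, im_cpow_real hzne]
      have harg0 : 0 ≤ arg ((x:ℂ) + w) := by rw [hwdef]; exact zarg_nonneg hθpos hθle ht
      have hargθ : arg ((x:ℂ) + w) ≤ θ := by rw [hwdef]; exact zarg_le hθpos hθle (le_of_lt hx) ht
      have hsin : 0 ≤ Real.sin ((ρ - 1) * arg ((x:ℂ) + w)) := by
        apply Real.sin_nonneg_of_nonneg_of_le_pi
        · exact mul_nonneg (by linarith) harg0
        · have h1 : (ρ - 1) * arg ((x:ℂ)+w) ≤ (ρ-1) * θ := by nlinarith
          have h2 : (ρ - 1) * θ ≤ π := by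
            rw [hθdef, mul_div_assoc', div_le_iff₀ (by linarith : (0:ℝ) < 2*ρ)]
            nlinarith [Real.pi_pos]
          linarith
      have habs : (0:ℝ) ≤ ‖(x:ℂ) + w‖ ^ (ρ - 1) := Real.rpow_nonneg (norm_nonneg _) _
      exact mul_nonneg hρ0.le (mul_nonneg habs hsin)
  have h01 := hmono Set.self_mem_Ici (Set.mem_Ici.2 hs) hs
  simp only at h01
  have hw0 : (((0:ℝ):ℂ) + w) = w := by push_cast; ring
  rw [hw0] at h01
  have hwne : w ≠ 0 := by rw [hwdef]; simpa [hw0] using zne (s := (0:ℝ)) hθpos hθle ht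
  have hwabs : ‖w‖ = t := by
    rw [hwdef, norm_mul, Complex.norm_real, Real.norm_eq_abs, Complex.norm_exp_ofReal_mul_I,
      _root_.abs_of_nonneg ht.le, mul_one]
  have hwarg : arg w = θ := by
    rw [hwdef, Complex.exp_mul_I]
    exact Complex.arg_mul_cos_add_sin_mul_I ht ⟨by linarith [Real.pi_pos], by linarith [Real.pi_pos]⟩
  have hwim : (w ^ (ρ:ℂ)).im = t ^ ρ := by
    rw [im_cpow_real hwne ρ, hwabs, hwarg,
      show ρ * θ = π/2 by rw [hθdef]; field_simp,
      Real.sin_pi_div_two, mul_one]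
  calc t ^ ρ = (w ^ (ρ:ℂ)).im := hwim.symm
    _ ≤ _ := h01


lemma phiInt_bound {j : ℕ} (hj : j = 1 ∨ j = 2) {ρ : ℝ} (hρ : 1 ≤ ρ)
    {μ : ℝ} (hμ : μ ∈ Set.Ioc (0:ℝ) 1) {s ω t : ℝ} (hs : 0 < s) (hω : 0 < ω) (ht : 0 < t)
    (n : ℕ) :
    ‖phiInt j n s ω ρ μ t‖ ≤ s ^ (μ - 1) * (t ^ ((n:ℝ)) * Real.exp (-ω * t ^ ρ)) := by
  obtain ⟨hμ0, hμ1⟩ := hμ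
  have hρ0 : 0 < ρ := by linarith
  have hθpos : 0 < π/(2*ρ) := div_pos Real.pi_pos (by linarith)
  have hθle : π/(2*ρ) ≤ π/2 := by
    rw [div_le_div_iff₀ (by linarith) (by norm_num)]
    nlinarith [Real.pi_pos]
  set z : ℂ := (s:ℂ) + (t:ℂ) * Complex.exp ((↑(π/(2*ρ)):ℂ) * Complex.I) with hz
  have him : 0 < z.im := zim_pos hθpos hθle ht
  have hzne : z ≠ 0 := zne hθpos hθle ht
  have habs_ge : s ≤ ‖z‖ := zabs_ge hθpos hθle hs.le ht.le
  have hkey : t ^ ρ ≤ (z ^ (ρ:ℂ)).im := key_im hρ hs.le ht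
  have hargne : Complex.arg z ≠ π := fun h => him.ne' (Complex.arg_eq_pi_iff.1 h).2
  have hmu : ((μ:ℂ) - 1) = ((μ - 1 : ℝ) : ℂ) := by push_cast; ring
  suffices h : ‖phiInt j n s ω ρ μ t‖ ≤
      t ^ (n:ℝ) * ‖z‖ ^ (μ-1) * Real.exp (-(ω * t^ρ)) by
    refine h.trans ?_
    have h2 : ‖z‖ ^ (μ-1) ≤ s ^ (μ-1) :=
      Real.rpow_le_rpow_of_nonpos hs habs_ge (by linarith)
    calc t ^ (n:ℝ) * ‖z‖ ^ (μ-1) * Real.exp (-(ω * t^ρ))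
        ≤ t ^ (n:ℝ) * s ^ (μ-1) * Real.exp (-(ω * t^ρ)) := by
          exact mul_le_mul_of_nonneg_right
            (mul_le_mul_of_nonneg_left h2 (Real.rpow_nonneg ht.le _)) (Real.exp_nonneg _)
      _ = s ^ (μ - 1) * (t ^ ((n:ℝ)) * Real.exp (-ω * t ^ ρ)) := by rw [neg_mul]; ring
  have habsn : ‖((s:ℂ) + (t:ℂ) * edir j ρ - (s:ℂ)) ^ n‖ = t ^ (n:ℝ) := by
    have h3 : ((s:ℂ) + (t:ℂ) * edir j ρ - (s:ℂ)) = (t:ℂ) * edir j ρ := by ring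
    rw [h3, norm_pow, norm_mul, Complex.norm_real, Real.norm_eq_abs, edir,
      Complex.norm_exp_ofReal_mul_I, _root_.abs_of_nonneg ht.le, mul_one, Real.rpow_natCast]
  have habse : ‖edir j ρ‖ = 1 := Complex.norm_exp_ofReal_mul_I _
  have hfin : ∀ u : ℂ, u.re = -(ω * (z ^ (ρ:ℂ)).im) →
      t ^ (n:ℝ) * ‖z‖ ^ (μ-1) * Real.exp u.re ≤
      t ^ (n:ℝ) * ‖z‖ ^ (μ-1) * Real.exp (-(ω * t^ρ)) := by
    intro u hu
    have h4 : Real.exp u.re ≤ Real.exp (-(ω * t^ρ)) := by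
      rw [hu]
      exact Real.exp_le_exp.2 (neg_le_neg (mul_le_mul_of_nonneg_left hkey hω.le))
    have ht' : (0:ℝ) ≤ t ^ (n:ℝ) * ‖z‖ ^ (μ-1) :=
      mul_nonneg (Real.rpow_nonneg ht.le _) (Real.rpow_nonneg (norm_nonneg _) _)
    rw [mul_assoc, mul_assoc]
    exact mul_le_mul_of_nonneg_left (by
      exact mul_le_mul_of_nonneg_left h4 (Real.rpow_nonneg (norm_nonneg _) _))
      (Real.rpow_nonneg ht.le _)
  rcases hj with rfl | rfl
  · -- j = 1
    have he : edir 1 ρ = Complex.exp ((↑(π/(2*ρ)):ℂ) * Complex.I) := by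
      simp [edir, esgn]
    have hzz : (s:ℂ) + (t:ℂ) * edir 1 ρ = z := by rw [he, hz]
    have hre : (((esgn 1 : ℝ):ℂ) * Complex.I * (ω:ℂ) * z ^ (ρ:ℂ)).re
        = -(ω * (z ^ (ρ:ℂ)).im) := by
      simp [esgn, Complex.mul_re, Complex.mul_im]
    rw [phiInt, norm_mul, norm_mul, norm_mul, habsn, habse, mul_one, hzz, hmu,
      Complex.norm_cpow_real, Complex.norm_exp]
    exact hfin _ hre
  · -- j = 2
    have he : edir 2 ρ = starRingEnd ℂ (Complex.exp ((↑(π/(2*ρ)):ℂ) * Complex.I)) := by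
      rw [edir, ← Complex.exp_conj]
      congr 1
      simp only [map_mul, Complex.conj_ofReal, Complex.conj_I, esgn]
      norm_num
    have hzz : (s:ℂ) + (t:ℂ) * edir 2 ρ = starRingEnd ℂ z := by
      rw [he, hz, map_add, map_mul, Complex.conj_ofReal, Complex.conj_ofReal]
    have hcpow : (starRingEnd ℂ z) ^ (ρ:ℂ) = starRingEnd ℂ (z ^ (ρ:ℂ)) := by
      rw [Complex.conj_cpow _ _ hargne, Complex.conj_ofReal]
    have hre : (((esgn 2 : ℝ):ℂ) * Complex.I * (ω:ℂ) * (starRingEnd ℂ z) ^ (ρ:ℂ)).re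
        = -(ω * (z ^ (ρ:ℂ)).im) := by
      rw [hcpow]
      simp [esgn, Complex.mul_re, Complex.mul_im]
    have habsz : ‖starRingEnd ℂ z‖ = ‖z‖ := Complex.norm_conj z
    rw [phiInt, norm_mul, norm_mul, norm_mul, habsn, habse, mul_one, hzz, hmu,
      Complex.norm_cpow_real, Complex.norm_exp, habsz]
    exact hfin _ hre

end auxlemmas

theorem statement1 (j : ℕ) (hj : j = 1 ∨ j = 2) (ρ : ℝ) (hρ : 1 ≤ ρ)
    (μ : ℝ) (hμ : μ ∈ Set.Ioc (0 : ℝ) 1) (N : ℕ) (hN : 1 ≤ N) :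
    ∀ s > (0 : ℝ), ∀ ω > (0 : ℝ),
      ‖phiE j (N - 1) s ω ρ μ‖ ≤
        (1 / (((N - 1).factorial : ℝ) * ρ)) * Real.Gamma ((N : ℝ) / ρ) *
          s ^ (μ - 1) * ω ^ (-(N : ℝ) / ρ) := by
  intro s hs ω hω
  have hρ0 : 0 < ρ := by linarith
  set n : ℕ := N - 1 with hn
  have hq : (-1 : ℝ) < (n : ℝ) := lt_of_lt_of_le (by norm_num) (Nat.cast_nonneg n)
  have hint : IntegrableOn (fun t : ℝ => s ^ (μ - 1) * (t ^ ((n:ℝ)) * Real.exp (-ω * t ^ ρ)))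
      (Set.Ioi 0) := by
    exact (integrableOn_rpow_mul_exp_neg_mul_rpow hq hρ0 hω).const_mul _
  have hbound : ‖∫ t in Set.Ioi (0:ℝ), phiInt j n s ω ρ μ t‖ ≤
      ∫ t in Set.Ioi (0:ℝ), s ^ (μ - 1) * (t ^ ((n:ℝ)) * Real.exp (-ω * t ^ ρ)) := by
    refine MeasureTheory.norm_integral_le_of_norm_le hint ?_
    filter_upwards [ae_restrict_mem measurableSet_Ioi] with t ht
    exact phiInt_bound hj hρ hμ hs hω ht n
  have hval : ∫ t in Set.Ioi (0:ℝ), s ^ (μ - 1) * (t ^ ((n:ℝ)) * Real.exp (-ω * t ^ ρ))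
      = s ^ (μ - 1) * (ω ^ (-((n:ℝ) + 1) / ρ) * (1 / ρ) * Real.Gamma (((n:ℝ) + 1) / ρ)) := by
    rw [MeasureTheory.integral_const_mul,
      integral_rpow_mul_exp_neg_mul_rpow hρ0 hq hω]
  have hNn : ((n:ℝ) + 1) = (N : ℝ) := by
    rw [hn]
    have : (N - 1 : ℕ) + 1 = N := Nat.succ_pred_eq_of_pos hN
    exact_mod_cast congrArg (Nat.cast : ℕ → ℝ) this
  have habs_coeff : ‖(-1 : ℂ) ^ (n + 1) / (n.factorial : ℂ)‖
      = 1 / (n.factorial : ℝ) := by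
    rw [norm_div, norm_pow]
    simp
  rw [phiE, norm_mul, habs_coeff]
  calc 1 / (n.factorial : ℝ) * ‖∫ t in Set.Ioi (0:ℝ), phiInt j n s ω ρ μ t‖
      ≤ 1 / (n.factorial : ℝ) *
        (s ^ (μ - 1) * (ω ^ (-((n:ℝ) + 1) / ρ) * (1 / ρ) * Real.Gamma (((n:ℝ) + 1) / ρ))) := by
        refine mul_le_mul_of_nonneg_left ?_ (by positivity)
        rw [← hval]
        simpa using hbound
    _ = (1 / (((N - 1).factorial : ℝ) * ρ)) * Real.Gamma ((N : ℝ) / ρ) *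
          s ^ (μ - 1) * ω ^ (-(N : ℝ) / ρ) := by
        rw [hNn, ← hn]
        field_simp
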